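/- Geometry of numbers lemma: There is an absolute constant K₀ such that the following holds. Let t ∈ ℝ³ with ‖t‖₂ = 1, let N > 1 > δ > 0, and let R = { v ∈ ℝ³ : ‖v‖₂ ≤ N, |v·t| ≤ δ }. If #(R ∩ ℤ³) ≥ δKN² for some K > K₀, then there exists a sublattice Λ ⊆ ℤ³ of rank at most 2 with #(Λ ∩ R) ≫ δKN², i.e. #(Λ ∩ R) ≥ c·δKN² for an absolute constant c > 0. -/

import Mathlib

/-- Euclidean norm on `ℝ³` (as `Fin 3 → ℝ`). -/
noncomputable def enorm3 (v : Fin 3 → ℝ) : ℝ := Real.sqrt (∑ i, (v i)^2)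

/-- Standard inner product on `ℝ³`. -/
def dot3 (v w : Fin 3 → ℝ) : ℝ := ∑ i, v i * w i

/-- Coercion of an integer vector to a real vector. -/
def zc (v : Fin 3 → ℤ) : Fin 3 → ℝ := fun i => (v i : ℝ)

noncomputable def toE (x : Fin 3 → ℝ) : EuclideanSpace ℝ (Fin 3) := (WithLp.equiv 2 _).symm x

lemma enorm3_eq (x : Fin 3 → ℝ) : enorm3 x = ‖toE x‖ := by
  rw [EuclideanSpace.norm_eq]
  simp [enorm3, toE, Real.norm_eq_abs, sq_abs]

lemma dot3_eq (x y : Fin 3 → ℝ) : dot3 x y = inner ℝ (toE x) (toE y) := by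
  rw [PiLp.inner_apply]
  simp [dot3, toE, mul_comm]

lemma toE_add (x y : Fin 3 → ℝ) : toE (x + y) = toE x + toE y := rfl
lemma toE_sub (x y : Fin 3 → ℝ) : toE (x - y) = toE x - toE y := rfl
lemma toE_smul (c : ℝ) (x : Fin 3 → ℝ) : toE (c • x) = c • toE x := rfl
lemma toE_sum {ι : Type*} (s : Finset ι) (f : ι → (Fin 3 → ℝ)) :
    toE (∑ i ∈ s, f i) = ∑ i ∈ s, toE (f i) := by
  induction s using Finset.cons_induction with
  | empty => rfl
  | cons a s h ih => rw [Finset.sum_cons, Finset.sum_cons, toE_add, ih]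

lemma enorm3_sub_le (x y : Fin 3 → ℝ) : enorm3 (x - y) ≤ enorm3 x + enorm3 y := by
  rw [enorm3_eq, enorm3_eq, enorm3_eq, toE_sub]; exact norm_sub_le _ _

lemma abs_dot3_le (x y : Fin 3 → ℝ) : |dot3 x y| ≤ enorm3 x * enorm3 y := by
  rw [dot3_eq, enorm3_eq, enorm3_eq]; exact abs_real_inner_le_norm _ _

lemma dot3_comm (x y : Fin 3 → ℝ) : dot3 x y = dot3 y x := by
  unfold dot3; exact Finset.sum_congr rfl fun i _ => mul_comm _ _

lemma dot3_sub_left (x y t : Fin 3 → ℝ) : dot3 (x - y) t = dot3 x t - dot3 y t := by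
  simp [dot3_eq, toE_sub, inner_sub_left]

lemma enorm3_sum_le {ι : Type*} (s : Finset ι) (c : ι → ℝ) (f : ι → (Fin 3 → ℝ)) :
    enorm3 (∑ i ∈ s, c i • f i) ≤ ∑ i ∈ s, |c i| * enorm3 (f i) := by
  rw [enorm3_eq, toE_sum]
  refine (norm_sum_le _ _).trans ?_
  refine Finset.sum_le_sum fun i _ => ?_
  rw [toE_smul, norm_smul, Real.norm_eq_abs, enorm3_eq]

lemma dot3_sum_left {ι : Type*} (s : Finset ι) (c : ι → ℝ) (f : ι → (Fin 3 → ℝ)) (t : Fin 3 → ℝ) :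
    dot3 (∑ i ∈ s, c i • f i) t = ∑ i ∈ s, c i * dot3 (f i) t := by
  simp only [dot3_eq, toE_sum]
  rw [sum_inner]
  refine Finset.sum_congr rfl fun i _ => ?_
  rw [toE_smul, real_inner_smul_left]

lemma zc_inj : Function.Injective zc := by
  intro a b h
  funext i
  have := congrFun h i
  simp only [zc] at this
  exact_mod_cast this

lemma finite_int_le (r : ℝ) : {y : Fin 3 → ℤ | enorm3 (zc y) ≤ r}.Finite := by
  have h : {y : Fin 3 → ℤ | enorm3 (zc y) ≤ r} ⊆
      Set.pi Set.univ (fun _ : Fin 3 => {z : ℤ | |z| ≤ ⌈r⌉}) := by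
    intro y hy i _
    simp only [Set.mem_setOf_eq]
    have h1 : ((y i : ℝ))^2 ≤ ∑ j, ((zc y) j)^2 := by
      have := Finset.single_le_sum (f := fun j => ((zc y) j)^2)
        (fun j _ => sq_nonneg _) (Finset.mem_univ i)
      simpa [zc] using this
    have h2 : |(y i : ℝ)| ≤ r := by
      have hr : 0 ≤ r := le_trans (Real.sqrt_nonneg _) hy
      have := Real.sqrt_le_sqrt h1
      rw [Real.sqrt_sq_eq_abs] at this
      exact this.trans (by simpa [enorm3] using hy)
    have : (|y i| : ℝ) ≤ (⌈r⌉ : ℝ) := by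
      push_cast
      exact h2.trans (Int.le_ceil r)
    exact_mod_cast this
  refine Set.Finite.subset (Set.Finite.pi fun i => ?_) h
  have : {z : ℤ | |z| ≤ ⌈r⌉} ⊆ Set.Icc (-⌈r⌉) ⌈r⌉ := by
    intro z hz; exact abs_le.mp hz
  exact (Set.finite_Icc _ _).subset this

open MeasureTheory in
lemma vol_slab (t : Fin 3 → ℝ) (ht : enorm3 t = 1) (a r : ℝ) (ha : 0 ≤ a) (hr : 0 ≤ r) :
    volume {x : Fin 3 → ℝ | enorm3 x ≤ r ∧ |dot3 x t| ≤ a} ≤ ENNReal.ofReal (8 * (a * r^2)) := by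
  classical
  -- orthonormal basis of EuclideanSpace with b 0 = toE t
  have ht2 : ‖toE t‖ = 1 := by rw [← enorm3_eq, ht]
  have horth : Orthonormal ℝ (Set.restrict {(0 : Fin 3)} (fun _ => toE t)) := by
    constructor
    · intro i; exact ht2
    · intro i j hij
      exact absurd (Subtype.ext (by
        have hi := i.2; have hj := j.2
        simp only [Set.mem_singleton_iff] at hi hj
        rw [hi, hj])) hij
  obtain ⟨b₂, hb₂⟩ := horth.exists_orthonormalBasis_extension_of_card_eq
    (by simp [finrank_euclideanSpace]) 
  have hb₂0 : b₂ 0 = toE t := hb₂ 0 rfl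
  set M : Matrix (Fin 3) (Fin 3) ℝ := Matrix.of (fun i j => (b₂ i : EuclideanSpace ℝ (Fin 3)) j)
    with hM
  have hMMT : M * M.transpose = 1 := by
    ext i j
    have : (M * M.transpose) i j = inner ℝ (b₂ i) (b₂ j) := by
      rw [Matrix.mul_apply, PiLp.inner_apply]
      simp [hM, Matrix.transpose_apply, RCLike.inner_apply, mul_comm]
    rw [this, orthonormal_iff_ite.mp b₂.orthonormal]
    simp [Matrix.one_apply]
  have hdet : M.det * M.det = 1 := by
    have := congrArg Matrix.det hMMT
    rwa [Matrix.det_mul, Matrix.det_transpose, Matrix.det_one] at this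
  have hdetne : M.det ≠ 0 := by
    intro h; rw [h, zero_mul] at hdet; exact one_ne_zero hdet.symm
  have habs : |M.det| = 1 := by
    have h1 : |M.det| * |M.det| = 1 := by rw [← abs_mul, hdet, abs_one]
    rcases mul_self_eq_one_iff.mp h1 with h | h
    · exact h
    · exfalso; have := abs_nonneg M.det; linarith
  -- the box
  set c : Fin 3 → ℝ := fun i => if i = 0 then a else r with hc
  have hsub : {x : Fin 3 → ℝ | enorm3 x ≤ r ∧ |dot3 x t| ≤ a} ⊆
      (Matrix.toLin' M) ⁻¹' (Set.pi Set.univ fun i => Set.Icc (-(c i)) (c i)) := by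
    intro x hx
    obtain ⟨hx1, hx2⟩ := hx
    intro i _
    have hval : (Matrix.toLin' M) x i = inner ℝ (b₂ i) (toE x) := by
      rw [Matrix.toLin'_apply, Matrix.mulVec, PiLp.inner_apply]
      simp [dotProduct, hM, RCLike.inner_apply, toE, mul_comm]
    rw [Set.mem_Icc, ← abs_le, hval]
    by_cases hi : i = 0
    · subst hi
      rw [hb₂0, ← dot3_eq]
      simp only [hc, if_pos rfl]
      rwa [dot3_comm]
    · have : |(inner ℝ (b₂ i) (toE x) : ℝ)| ≤ ‖b₂ i‖ * ‖toE x‖ := abs_real_inner_le_norm _ _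
      rw [b₂.orthonormal.1 i, one_mul, ← enorm3_eq] at this
      simp only [hc, if_neg hi]
      exact this.trans hx1
  refine (measure_mono hsub).trans ?_
  have hdetlin : LinearMap.det (Matrix.toLin' M) ≠ 0 := by
    rwa [LinearMap.det_toLin']
  rw [MeasureTheory.Measure.addHaar_preimage_linearMap volume hdetlin]
  rw [LinearMap.det_toLin']
  have hbox : volume (Set.pi Set.univ fun i => Set.Icc (-(c i)) (c i)) = 
      ENNReal.ofReal (2*a) * (ENNReal.ofReal (2*r) * ENNReal.ofReal (2*r)) := by
    rw [volume_pi_pi]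
    have : ∀ i, volume (Set.Icc (-(c i)) (c i)) = ENNReal.ofReal (2 * c i) := by
      intro i; rw [Real.volume_Icc]; congr 1; ring
    rw [Fin.prod_univ_three, this, this, this]
    simp only [hc]
    norm_num [mul_assoc, show ¬(2:Fin 3)=0 by decide]
  rw [hbox]
  rw [abs_inv, habs]
  rw [← ENNReal.ofReal_mul (by linarith), ← ENNReal.ofReal_mul (by nlinarith)]
  simp only [inv_one, ENNReal.ofReal_one, one_mul]
  exact ENNReal.ofReal_le_ofReal (by nlinarith)

lemma zc_add (a b : Fin 3 → ℤ) : zc (a + b) = zc a + zc b := by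
  funext i; simp [zc]

lemma zc_sub (a b : Fin 3 → ℤ) : zc (a - b) = zc a - zc b := by
  funext i; simp [zc]

lemma zc_zsmul (n : ℤ) (a : Fin 3 → ℤ) : zc (n • a) = n • zc a := by
  funext i; simp [zc]

lemma enorm3_add_le (x y : Fin 3 → ℝ) : enorm3 (x + y) ≤ enorm3 x + enorm3 y := by
  rw [enorm3_eq, enorm3_eq, enorm3_eq, toE_add]; exact norm_add_le _ _

lemma dot3_add_left (x y t : Fin 3 → ℝ) : dot3 (x + y) t = dot3 x t + dot3 y t := by
  simp [dot3_eq, toE_add, inner_add_left]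

open MeasureTheory in
lemma cube_vol : volume (ZSpan.fundamentalDomain (Pi.basisFun ℝ (Fin 3))) = 1 := by
  rw [ZSpan.fundamentalDomain_pi_basisFun, volume_pi_pi]
  simp [Real.volume_Ico]

lemma mem_cube_iff (x : Fin 3 → ℝ) :
    x ∈ ZSpan.fundamentalDomain (Pi.basisFun ℝ (Fin 3)) ↔ ∀ i, x i ∈ Set.Ico (0:ℝ) 1 := by
  simp [ZSpan.fundamentalDomain_pi_basisFun]

lemma int_cube_zero {h : Fin 3 → ℤ} {c : Fin 3 → ℝ}
    (hc : c ∈ ZSpan.fundamentalDomain (Pi.basisFun ℝ (Fin 3)))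
    (hhc : zc h + c ∈ ZSpan.fundamentalDomain (Pi.basisFun ℝ (Fin 3))) : h = 0 := by
  rw [mem_cube_iff] at hc hhc
  funext i
  simp only [Pi.zero_apply]
  have h1 := hc i
  have h2 := hhc i
  simp only [Set.mem_Ico, Pi.add_apply, zc] at h1 h2
  have hl : (-1 : ℝ) < (h i : ℝ) := by linarith
  have hr : (h i : ℝ) < 1 := by linarith
  have hl' : -1 < h i := by exact_mod_cast hl
  have hr' : h i < 1 := by exact_mod_cast hr
  omega

open MeasureTheory Submodule ENNReal in
lemma count_bound (t : Fin 3 → ℝ) (ht : enorm3 t = 1) (N δ : ℝ) (hN : 0 < N) (hδ0 : 0 < δ)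
    (v : Fin 3 → Fin 3 → ℤ)
    (hvN : ∀ i, enorm3 (zc (v i)) ≤ N) (hvδ : ∀ i, |dot3 (zc (v i)) t| ≤ δ)
    (hind : LinearIndependent ℝ (fun i => zc (v i))) :
    (({u : Fin 3 → ℤ | enorm3 (zc u) ≤ N ∧ |dot3 (zc u) t| ≤ δ}).ncard : ℝ) ≤
      2744 * (δ * N^2) := by
  classical
  set S := {u : Fin 3 → ℤ | enorm3 (zc u) ≤ N ∧ |dot3 (zc u) t| ≤ δ} with hS
  have hSfin : S.Finite := (finite_int_le N).subset (fun u hu => hu.1)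
  have hcard : Fintype.card (Fin 3) = Module.finrank ℝ (Fin 3 → ℝ) := by simp
  set b : Module.Basis (Fin 3) ℝ (Fin 3 → ℝ) := basisOfLinearIndependentOfCardEqFinrank hind hcard
    with hbdef
  have hbcoe : ∀ i, b i = zc (v i) := by
    intro i
    rw [hbdef, coe_basisOfLinearIndependentOfCardEqFinrank]
  set L : Submodule ℤ (Fin 3 → ℝ) := span ℤ (Set.range ⇑b) with hL
  set D : Set (Fin 3 → ℝ) := ZSpan.fundamentalDomain b with hD
  -- integrality of L
  have hLint : ∀ x ∈ L, ∃ z : Fin 3 → ℤ, zc z = x := by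
    intro x hx
    refine span_induction ?_ ?_ ?_ ?_ hx
    · rintro y ⟨i, rfl⟩; exact ⟨v i, (hbcoe i).symm⟩
    · exact ⟨0, by funext i; simp [zc]⟩
    · rintro y z - - ⟨a, rfl⟩ ⟨c, rfl⟩; exact ⟨a + c, zc_add a c⟩
    · rintro n y - ⟨a, rfl⟩; exact ⟨n • a, zc_zsmul n a⟩
  -- bounds on D
  have hDbound : ∀ x ∈ D, enorm3 x ≤ 3*N ∧ |dot3 x t| ≤ 3*δ := by
    intro x hx
    have hco : ∀ i, b.repr x i ∈ Set.Ico (0:ℝ) 1 := (ZSpan.mem_fundamentalDomain b).mp hx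
    have habs : ∀ i, |b.repr x i| ≤ 1 := by
      intro i
      obtain ⟨h0, h1⟩ := hco i
      rw [abs_of_nonneg h0]; linarith
    have hxr : x = ∑ i, b.repr x i • b i := (b.sum_repr x).symm
    constructor
    · calc enorm3 x = enorm3 (∑ i, b.repr x i • b i) := by conv_lhs => rw [hxr]
        _ ≤ ∑ i, |b.repr x i| * enorm3 (b i) := enorm3_sum_le _ _ _
        _ ≤ ∑ _i : Fin 3, 1 * N := by
            refine Finset.sum_le_sum fun i _ => ?_
            rw [hbcoe i]
            exact mul_le_mul (habs i) (hvN i) (by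
              rw [enorm3]; positivity) zero_le_one
        _ = 3*N := by simp [Fin.sum_univ_three]; try ring
    · calc |dot3 x t| = |∑ i, b.repr x i * dot3 (b i) t| := by
            conv_lhs => rw [hxr]
            rw [dot3_sum_left]
        _ ≤ ∑ i, |b.repr x i * dot3 (b i) t| := Finset.abs_sum_le_sum_abs _ _
        _ ≤ ∑ _i : Fin 3, 1 * δ := by
            refine Finset.sum_le_sum fun i _ => ?_
            rw [abs_mul, hbcoe i]
            exact mul_le_mul (habs i) (hvδ i) (abs_nonneg _) zero_le_one
        _ = 3*δ := by simp [Fin.sum_univ_three]; try ring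
  set A : Set (Fin 3 → ℝ) := {y | y ∈ D ∧ ∃ z : Fin 3 → ℤ, zc z = y} with hA
  set B : Set (Fin 3 → ℝ) := {w | w ∈ L ∧ enorm3 w ≤ 4*N ∧ |dot3 w t| ≤ 4*δ} with hB
  have hAfin : A.Finite := by
    refine ((finite_int_le (3*N)).image zc).subset ?_
    rintro y ⟨hyD, z, rfl⟩
    exact Set.mem_image_of_mem zc ((hDbound _ hyD).1)
  have hBfin : B.Finite := by
    refine ((finite_int_le (4*N)).image zc).subset ?_
    rintro w ⟨hwL, hw1, hw2⟩
    obtain ⟨z, rfl⟩ := hLint w hwL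
    exact Set.mem_image_of_mem zc hw1
  -- the injection
  have hmaps : ∀ u ∈ S, (ZSpan.fract b (zc u), zc u - ZSpan.fract b (zc u)) ∈ A ×ˢ B := by
    intro u hu
    have hfr : ZSpan.fract b (zc u) ∈ D := ZSpan.fract_mem_fundamentalDomain b (zc u)
    have hfloor : (ZSpan.floor b (zc u) : Fin 3 → ℝ) ∈ L := SetLike.coe_mem _
    have hsub : zc u - ZSpan.fract b (zc u) = (ZSpan.floor b (zc u) : Fin 3 → ℝ) := by
      rw [ZSpan.fract_apply]; ring
    constructor
    · refine ⟨hfr, ?_⟩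
      obtain ⟨z2, hz2⟩ := hLint _ hfloor
      refine ⟨u - z2, ?_⟩
      rw [zc_sub, hz2, ZSpan.fract_apply]
    · refine ⟨by rw [hsub]; exact hfloor, ?_, ?_⟩
      · refine (enorm3_sub_le _ _).trans ?_
        have := (hDbound _ hfr).1
        have hu1 := hu.1
        linarith
      · rw [dot3_sub_left]
        have h1 := (hDbound _ hfr).2
        have h2 := hu.2
        calc |dot3 (zc u) t - dot3 (ZSpan.fract b (zc u)) t| ≤
            |dot3 (zc u) t| + |dot3 (ZSpan.fract b (zc u)) t| := abs_sub _ _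
          _ ≤ 4*δ := by linarith
  have hinj : Set.InjOn (fun u => (ZSpan.fract b (zc u), zc u - ZSpan.fract b (zc u))) S := by
    intro u1 h1 u2 h2 h
    simp only [Prod.mk.injEq] at h
    have : zc u1 = zc u2 := by
      have := congrArg₂ (· + ·) h.1 h.2
      simpa using this
    exact zc_inj this
  have hcount : S.ncard ≤ A.ncard * B.ncard := by
    have h1 : S.ncard ≤ (A ×ˢ B).ncard :=
      Set.ncard_le_ncard_of_injOn _ hmaps hinj (hAfin.prod hBfin)
    refine h1.trans_eq ?_
    rw [Set.ncard_eq_toFinset_card _ (hAfin.prod hBfin),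
      ← Set.Finite.toFinset_prod hAfin hBfin,
      Finset.card_product, ← Set.ncard_eq_toFinset_card _ hAfin,
      ← Set.ncard_eq_toFinset_card _ hBfin]
  -- measure theory part
  have hDmeas : MeasurableSet D := ZSpan.fundamentalDomain_measurableSet b
  set C₁ : Set (Fin 3 → ℝ) := ZSpan.fundamentalDomain (Pi.basisFun ℝ (Fin 3)) with hC₁
  have hC₁meas : MeasurableSet C₁ := ZSpan.fundamentalDomain_measurableSet _
  have hsubmeas : ∀ y : Fin 3 → ℝ, Measurable (fun x : Fin 3 → ℝ => x - y) :=
    fun y => measurable_id.sub_const y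
  have htrans_vol : ∀ (y : Fin 3 → ℝ) (s : Set (Fin 3 → ℝ)),
      volume ((fun x => x - y) ⁻¹' s) = volume s := by
    intro y s
    have : (fun x : Fin 3 → ℝ => x - y) = (fun x => x + (-y)) := by
      funext x; rw [sub_eq_add_neg]
    rw [this]
    exact measure_preimage_add_right volume (-y) s
  set U : Set (Fin 3 → ℝ) := ⋃ y ∈ hAfin.toFinset, (fun x => x - y) ⁻¹' C₁ with hU
  have hdisjA : (hAfin.toFinset : Set (Fin 3 → ℝ)).PairwiseDisjoint
      (fun y => (fun x => x - y) ⁻¹' C₁) := by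
    intro y1 hy1 y2 hy2 hne
    simp only [Set.Finite.coe_toFinset] at hy1 hy2
    obtain ⟨-, zy1, rfl⟩ := hy1
    obtain ⟨-, zy2, rfl⟩ := hy2
    refine Set.disjoint_left.mpr fun x hx1 hx2 => hne ?_
    simp only [Set.mem_preimage] at hx1 hx2
    have hkey : x - zc zy2 = zc (zy1 - zy2) + (x - zc zy1) := by
      rw [zc_sub]; ring
    rw [hkey] at hx2
    have h0 : zy1 - zy2 = 0 := int_cube_zero hx1 hx2
    rw [sub_eq_zero.mp h0]
  have hUvol : volume U = (A.ncard : ℝ≥0∞) := by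
    rw [hU, measure_biUnion_finset hdisjA (fun y _ => hC₁meas.preimage (hsubmeas y))]
    have : ∀ y ∈ hAfin.toFinset, volume ((fun x => x - y) ⁻¹' C₁) = 1 := by
      intro y _; rw [htrans_vol, hC₁, cube_vol]
    rw [Finset.sum_congr rfl this, Finset.sum_const, nsmul_eq_mul, mul_one,
      Set.ncard_eq_toFinset_card _ hAfin]
  -- U is a fundamental domain for L
  have hUfd : IsAddFundamentalDomain L U volume := by
    refine IsAddFundamentalDomain.mk' ?_ ?_
    · exact (Finset.measurableSet_biUnion _
        (fun y _ => hC₁meas.preimage (hsubmeas y))).nullMeasurableSet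
    · intro x
      set w : Fin 3 → ℤ := fun i => ⌊x i⌋ with hw
      have hcmem : x - zc w ∈ C₁ := by
        rw [hC₁, mem_cube_iff]
        intro i
        refine ⟨?_, ?_⟩
        · simp only [Pi.sub_apply, zc, hw]
          have := Int.floor_le (x i); linarith
        · simp only [Pi.sub_apply, zc, hw]
          have := Int.lt_floor_add_one (x i); linarith
      have hmemU : ∀ x' : Fin 3 → ℝ,
          x' ∈ U ↔ ∃ y, y ∈ A ∧ x' - y ∈ C₁ := by
        intro x'
        rw [hU]
        simp only [Set.mem_iUnion, Set.mem_preimage, Set.Finite.mem_toFinset, exists_prop]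
      have key : ∀ g : L, ((g : Fin 3 → ℝ) + x ∈ U ↔ (g : Fin 3 → ℝ) + zc w ∈ D) := by
        intro g
        obtain ⟨zg, hzg⟩ := hLint (g : Fin 3 → ℝ) (SetLike.coe_mem g)
        rw [hmemU]
        constructor
        · rintro ⟨y, ⟨hyD, zy, rfl⟩, hyC⟩
          have hkey : (g : Fin 3 → ℝ) + x - zc zy
              = zc (zg + w - zy) + (x - zc w) := by
            rw [zc_sub, zc_add, hzg]; ring
          rw [hkey] at hyC
          have h0 := int_cube_zero hcmem hyC
          have hzy : zy = zg + w := (sub_eq_zero.mp h0).symm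
          have : zc zy = (g : Fin 3 → ℝ) + zc w := by rw [hzy, zc_add, hzg]
          rwa [← this]
        · intro hgD
          refine ⟨(g : Fin 3 → ℝ) + zc w, ⟨hgD, zg + w, by rw [zc_add, hzg]⟩, ?_⟩
          have : (g : Fin 3 → ℝ) + x - ((g : Fin 3 → ℝ) + zc w) = x - zc w := by ring
          rw [this]
          exact hcmem
      obtain ⟨g₀, hg₀, hguniq⟩ := ZSpan.exist_unique_vadd_mem_fundamentalDomain b (zc w)
      refine ⟨g₀, ?_, ?_⟩
      · show g₀ +ᵥ x ∈ U
        have : g₀ +ᵥ x = (g₀ : Fin 3 → ℝ) + x := rfl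
        rw [this]
        exact (key g₀).mpr hg₀
      · intro g hg
        refine hguniq g ?_
        have hgx : g +ᵥ x = (g : Fin 3 → ℝ) + x := rfl
        rw [hgx] at hg
        show g +ᵥ zc w ∈ ZSpan.fundamentalDomain b
        have : g +ᵥ zc w = (g : Fin 3 → ℝ) + zc w := rfl
        rw [this]
        exact (key g).mp hg
  haveI : MeasurableVAdd ↥L (Fin 3 → ℝ) :=
    inferInstanceAs (MeasurableVAdd L.toAddSubgroup (Fin 3 → ℝ))
  haveI : VAddInvariantMeasure ↥L (Fin 3 → ℝ) volume :=
    inferInstanceAs (VAddInvariantMeasure L.toAddSubgroup (Fin 3 → ℝ) volume)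
  have hAD : (A.ncard : ℝ≥0∞) = volume D := by
    rw [← hUvol]
    exact hUfd.measure_eq (ZSpan.isAddFundamentalDomain b volume)
  -- packing
  have hpack : (B.ncard : ℝ≥0∞) * volume D ≤ ENNReal.ofReal (2744 * (δ * N^2)) := by
    have hdisjB : (hBfin.toFinset : Set (Fin 3 → ℝ)).PairwiseDisjoint
        (fun wv => (fun x => x - wv) ⁻¹' D) := by
      intro w1 hw1 w2 hw2 hne
      simp only [Set.Finite.coe_toFinset] at hw1 hw2
      refine Set.disjoint_left.mpr fun x hx1 hx2 => hne ?_
      simp only [Set.mem_preimage] at hx1 hx2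
      have e1 : ZSpan.fract b (x - w1) = x - w1 := ZSpan.fract_eq_self.mpr hx1
      have e2 : ZSpan.fract b (x - w2) = x - w2 := ZSpan.fract_eq_self.mpr hx2
      have f1 : ZSpan.fract b (x - w1) = ZSpan.fract b x := by
        rw [sub_eq_neg_add]
        exact ZSpan.fract_zSpan_add b x (neg_mem hw1.1)
      have f2 : ZSpan.fract b (x - w2) = ZSpan.fract b x := by
        rw [sub_eq_neg_add]
        exact ZSpan.fract_zSpan_add b x (neg_mem hw2.1)
      have : x - w1 = x - w2 := by rw [← e1, f1, ← f2, e2]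
      exact sub_right_inj.mp this
    have hcalc : (B.ncard : ℝ≥0∞) * volume D
        = volume (⋃ wv ∈ hBfin.toFinset, (fun x => x - wv) ⁻¹' D) := by
      rw [measure_biUnion_finset hdisjB (fun wv _ => hDmeas.preimage (hsubmeas wv))]
      have : ∀ wv ∈ hBfin.toFinset, volume ((fun x => x - wv) ⁻¹' D) = volume D := by
        intro wv _; rw [htrans_vol]
      rw [Finset.sum_congr rfl this, Finset.sum_const, nsmul_eq_mul,
        Set.ncard_eq_toFinset_card _ hBfin]
    rw [hcalc]
    have hsub7 : (⋃ wv ∈ hBfin.toFinset, (fun x => x - wv) ⁻¹' D) ⊆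
        {x : Fin 3 → ℝ | enorm3 x ≤ 7*N ∧ |dot3 x t| ≤ 7*δ} := by
      intro x hx
      simp only [Set.mem_iUnion, Set.mem_preimage, Set.Finite.mem_toFinset] at hx
      obtain ⟨wv, hwv, hxD⟩ := hx
      obtain ⟨hd1, hd2⟩ := hDbound _ hxD
      obtain ⟨-, hw1, hw2⟩ := hwv
      have hxw : x = wv + (x - wv) := by ring
      constructor
      · rw [hxw] 
        refine (enorm3_add_le _ _).trans ?_
        linarith
      · conv_lhs => rw [hxw]
        rw [dot3_add_left]
        refine (abs_add_le _ _).trans ?_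
        linarith
    refine (measure_mono hsub7).trans ?_
    refine (vol_slab t ht (7*δ) (7*N) (by linarith) (by linarith)).trans ?_
    exact ENNReal.ofReal_le_ofReal (by nlinarith)
  -- conclude
  have hfin : (S.ncard : ℝ≥0∞) ≤ ENNReal.ofReal (2744 * (δ * N^2)) := by
    calc (S.ncard : ℝ≥0∞) ≤ (A.ncard : ℝ≥0∞) * (B.ncard : ℝ≥0∞) := by
          exact_mod_cast hcount
      _ = volume D * (B.ncard : ℝ≥0∞) := by rw [hAD]
      _ = (B.ncard : ℝ≥0∞) * volume D := mul_comm _ _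
      _ ≤ _ := hpack
  have h1 : ((S.ncard : ℝ≥0∞)).toReal ≤ (ENNReal.ofReal (2744 * (δ * N^2))).toReal :=
    ENNReal.toReal_mono ENNReal.ofReal_ne_top hfin
  rw [ENNReal.toReal_natCast, ENNReal.toReal_ofReal (by nlinarith)] at h1
  exact h1

open Submodule in
lemma exists_three_indep {S : Set (Fin 3 → ℤ)}
    (h : ¬ (Module.finrank ℝ (span ℝ (zc '' S)) ≤ 2)) :
    ∃ v : Fin 3 → (Fin 3 → ℤ), (∀ i, v i ∈ S) ∧
      LinearIndependent ℝ (fun i => zc (v i)) := by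
  classical
  obtain ⟨B, hBsub, hBspan, hBind⟩ := exists_linearIndependent ℝ (zc '' S)
  haveI : Fintype B := hBind.setFinite.fintype
  have hrank : Module.finrank ℝ (span ℝ B) = B.toFinset.card := by
    rw [finrank_span_set_eq_card hBind]
  have h3 : 3 ≤ B.toFinset.card := by
    by_contra hc
    push_neg at hc
    apply h
    rw [← hBspan, hrank]
    omega
  have hcard3 : Fintype.card (Fin 3) ≤ Fintype.card B := by
    rw [Set.toFinset_card] at h3
    simpa using h3
  obtain ⟨f⟩ := Function.Embedding.nonempty_of_card_le hcard3
  have hind : LinearIndependent ℝ (fun i : Fin 3 => ((f i : B) : Fin 3 → ℝ)) :=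
    hBind.comp f f.injective
  have hmem : ∀ i : Fin 3, ((f i : B) : Fin 3 → ℝ) ∈ zc '' S := fun i => hBsub (f i).2
  choose v hvS hzc using fun i => hmem i
  refine ⟨v, hvS, ?_⟩
  have : (fun i => zc (v i)) = fun i : Fin 3 => ((f i : B) : Fin 3 → ℝ) := by
    funext i; rw [hzc]
  rw [this]
  exact hind

open Submodule in
lemma rank_le_two_gen {S : Set (Fin 3 → ℤ)}
    (h : Module.finrank ℝ (span ℝ (zc '' S)) ≤ 2) :
    ∃ a b : Fin 3 → ℤ, S ⊆ (AddSubgroup.closure {a, b} : Set (Fin 3 → ℤ)) := by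
  classical
  set Λ : Submodule ℤ (Fin 3 → ℤ) := span ℤ S with hΛ
  obtain ⟨n, bb⟩ := Submodule.basisOfPid (Pi.basisFun ℤ (Fin 3)) Λ
  -- the coerced basis vectors
  have hbbZind : LinearIndependent ℤ (fun i : Fin n => ((bb i : Λ) : Fin 3 → ℤ)) :=
    bb.linearIndependent.map' Λ.subtype (Submodule.ker_subtype Λ)
  have hn : n ≤ 2 := by
    by_contra hc
    push_neg at hc
    have hemb : Fintype.card (Fin 3) ≤ Fintype.card (Fin n) := by simp; omega
    obtain ⟨f⟩ := Function.Embedding.nonempty_of_card_le hemb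
    set w : Fin 3 → (Fin 3 → ℤ) := fun i => ((bb (f i) : Λ) : Fin 3 → ℤ) with hwdef
    have hwind : LinearIndependent ℤ w := hbbZind.comp f f.injective
    set A : Matrix (Fin 3) (Fin 3) ℤ := Matrix.of (fun i j => w i j) with hAdef
    have hdet : A.det ≠ 0 := by
      intro hdet0
      obtain ⟨c, hc0, hcA⟩ := Matrix.exists_vecMul_eq_zero_iff.mpr hdet0
      have : ∑ i, c i • w i = 0 := by
        funext j
        have := congrFun hcA j
        simpa [Matrix.vecMul, dotProduct, hAdef] using this
      have hall := Fintype.linearIndependent_iff.mp hwind c this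
      apply hc0
      funext i
      exact hall i
    have hdetR : (A.map (Int.cast : ℤ → ℝ)).det ≠ 0 := by
      have hmd : ((A.det : ℝ)) = (A.map (Int.cast : ℤ → ℝ)).det :=
        (Int.castRingHom ℝ).map_det A
      rw [← hmd]
      exact_mod_cast hdet
    have hindR : LinearIndependent ℝ (fun i => (A.map (Int.cast : ℤ → ℝ)) i) := by
      exact Matrix.linearIndependent_rows_of_det_ne_zero hdetR
    have hrowzc : (fun i => (A.map (Int.cast : ℤ → ℝ)) i) = fun i => zc (w i) := by
      funext i; funext j; simp [Matrix.map, hAdef, zc]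
    rw [hrowzc] at hindR
    -- each zc (w i) is in the real span of zc '' S
    have hmem : ∀ i : Fin 3, zc (w i) ∈ span ℝ (zc '' S) := by
      intro i
      have hwΛ : w i ∈ Λ := (bb (f i)).2
      have hzcmap : ∀ x ∈ Λ, zc x ∈ span ℝ (zc '' S) := by
        intro x hx
        refine span_induction ?_ ?_ ?_ ?_ hx
        · intro y hy
          exact subset_span (Set.mem_image_of_mem zc hy)
        · have : zc 0 = 0 := by funext i; simp [zc]
          rw [this]; exact zero_mem _
        · intro y z _ _ hy hz
          rw [zc_add]; exact add_mem hy hz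
        · intro m y _ hy
          rw [zc_zsmul, ← Int.cast_smul_eq_zsmul ℝ]
          exact smul_mem _ _ hy
      exact hzcmap _ hwΛ
    have hindV : LinearIndependent ℝ
        (fun i : Fin 3 => (⟨zc (w i), hmem i⟩ : span ℝ (zc '' S))) := by
      refine LinearIndependent.of_comp (span ℝ (zc '' S)).subtype ?_
      convert hindR
      rfl
    have := hindV.fintype_card_le_finrank
    simp only [Fintype.card_fin] at this
    omega
  -- now n ≤ 2 : extract generators
  set a : Fin 3 → ℤ := if h0 : 0 < n then ((bb ⟨0, h0⟩ : Λ) : Fin 3 → ℤ) else 0 with ha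
  set bvec : Fin 3 → ℤ := if h1 : 1 < n then ((bb ⟨1, h1⟩ : Λ) : Fin 3 → ℤ) else 0 with hbv
  refine ⟨a, bvec, ?_⟩
  intro x hxS
  have hxΛ : x ∈ Λ := subset_span hxS
  -- x is in the span of the basis images
  have hxspan : x ∈ span ℤ (Set.range (fun i : Fin n => ((bb i : Λ) : Fin 3 → ℤ))) := by
    have h1 : (⟨x, hxΛ⟩ : Λ) ∈ (⊤ : Submodule ℤ Λ) := trivial
    rw [← bb.span_eq] at h1
    have h2 := Submodule.mem_map_of_mem (f := Λ.subtype) h1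
    rw [Submodule.map_span] at h2
    simp [← Set.range_comp, Function.comp] at h2; exact h2
  have hsub2 : Set.range (fun i : Fin n => ((bb i : Λ) : Fin 3 → ℤ)) ⊆ {a, bvec} := by
    rintro y ⟨i, rfl⟩
    have hi2 := i.isLt
    simp only [Set.mem_insert_iff, Set.mem_singleton_iff]
    rcases Nat.lt_or_ge (i : ℕ) 1 with hi | hi
    · left
      have hieq : i = ⟨0, by omega⟩ := by
        apply Fin.ext
        simp only [Fin.val_mk]
        omega
      rw [hieq, ha, dif_pos (by omega : 0 < n)]
    · right
      have hieq : i = ⟨1, by omega⟩ := by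
        apply Fin.ext
        simp only [Fin.val_mk]
        omega
      rw [hieq, hbv, dif_pos (by omega : 1 < n)]
  have hle : span ℤ (Set.range (fun i : Fin n => ((bb i : Λ) : Fin 3 → ℤ)))
      ≤ AddSubgroup.toIntSubmodule (AddSubgroup.closure {a, bvec}) := by
    rw [span_le]
    refine hsub2.trans ?_
    intro y hy
    exact AddSubgroup.subset_closure hy
  exact hle hxspan

theorem stmt_8 : ∃ K₀ c : ℝ, 0 < K₀ ∧ 0 < c ∧
    ∀ (t : Fin 3 → ℝ), enorm3 t = 1 →
    ∀ (N δ K : ℝ), 1 < N → 0 < δ → δ < 1 → K₀ < K →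
    δ * K * N^2 ≤
      (({v : Fin 3 → ℤ | enorm3 (zc v) ≤ N ∧ |dot3 (zc v) t| ≤ δ}).ncard : ℝ) →
    ∃ a b : Fin 3 → ℤ,
      c * (δ * K * N^2) ≤
        (({v : Fin 3 → ℤ | v ∈ AddSubgroup.closure {a, b} ∧
            enorm3 (zc v) ≤ N ∧ |dot3 (zc v) t| ≤ δ}).ncard : ℝ) := by
  refine ⟨3000, 1, by norm_num, by norm_num, ?_⟩
  intro t ht N δ K hN hδ0 hδ1 hK hcard
  set S : Set (Fin 3 → ℤ) := {v | enorm3 (zc v) ≤ N ∧ |dot3 (zc v) t| ≤ δ} with hS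
  by_cases hr : Module.finrank ℝ (Submodule.span ℝ (zc '' S)) ≤ 2
  · obtain ⟨a, b, hab⟩ := rank_le_two_gen hr
    refine ⟨a, b, ?_⟩
    have hEq : {v : Fin 3 → ℤ | v ∈ AddSubgroup.closure {a, b} ∧
        enorm3 (zc v) ≤ N ∧ |dot3 (zc v) t| ≤ δ} = S := by
      ext v
      constructor
      · rintro ⟨-, h1, h2⟩; exact ⟨h1, h2⟩
      · intro hv; exact ⟨hab hv, hv.1, hv.2⟩
    rw [hEq, one_mul]
    exact hcard
  · exfalso
    obtain ⟨v, hvS, hvind⟩ := exists_three_indep hr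
    have hb := count_bound t ht N δ (lt_trans one_pos hN) hδ0 v
      (fun i => (hvS i).1) (fun i => (hvS i).2) hvind
    have hle : δ * K * N^2 ≤ 2744 * (δ * N^2) := le_trans hcard hb
    have hNpos : (0:ℝ) < N^2 := by positivity
    nlinarith
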